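/- Let A = ℝ·1 ⊕ N be a Weil algebra. The extension T_A(f)(λ·1+n) = Σ_j (f^{(j)}(λ)/j!)·n^j applied to the multiplication map m(x,y) = xy recovers the algebra multiplication of A, applied to addition recovers the addition, and applied to scalar multiplication by t recovers multiplication by t·1. In particular the Weil algebra A can be recovered from the functor T_A evaluated at ℝ. -/

import Mathlib

section Aux

private lemma derivLinear (c d : ℝ) : deriv (fun x : ℝ => c * x + d) = fun _ => c := by
  funext x
  simpa using (((hasDerivAt_id x).const_mul c).add_const d).deriv

private lemma itdConst (c : ℝ) (n : ℕ) :
    iteratedDeriv (n + 1) (fun _ : ℝ => c) = fun _ => 0 := by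
  induction n with
  | zero => rw [iteratedDeriv_one]; funext x; simp
  | succ n ih => rw [iteratedDeriv_succ, ih]; funext x; simp

private lemma itdLinear (c d : ℝ) (j : ℕ) :
    iteratedDeriv j (fun x : ℝ => c * x + d) =
      if j = 0 then (fun x => c * x + d) else if j = 1 then (fun _ => c) else fun _ => 0 := by
  match j with
  | 0 => simp
  | 1 => rw [iteratedDeriv_one, derivLinear]; simp
  | (n + 2) =>
    rw [iteratedDeriv_succ', derivLinear, itdConst]
    simp

private lemma itdLinear' (f : ℝ → ℝ) (c d : ℝ) (hf : ∀ x, f x = c * x + d) (j : ℕ) (x : ℝ) :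
    iteratedDeriv j f x = if j = 0 then c * x + d else if j = 1 then c else 0 := by
  have h : f = fun x => c * x + d := funext hf
  rw [h, itdLinear]
  split_ifs <;> simp

private lemma sumTwo {M : Type*} [AddCommMonoid M] {k : ℕ} (hk : 2 ≤ k) (g : ℕ → M)
    (h : ∀ i, 2 ≤ i → g i = 0) :
    ∑ i ∈ Finset.range k, g i = g 0 + g 1 := by
  have h2 : ∑ i ∈ Finset.range 2, g i = ∑ i ∈ Finset.range k, g i :=
    Finset.sum_subset (Finset.range_subset_range.2 hk)
      (fun i _ hi => h i (le_of_not_gt (by simpa using hi)))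
  rw [← h2]
  simp [Finset.sum_range_succ]

end Aux

/-- Taylor-expansion extension of a one-variable function to a Weil algebra. -/
noncomputable def TA {A : Type*} [CommRing A] [Algebra ℝ A]
    (p : A →ₐ[ℝ] ℝ) (k : ℕ) (f : ℝ → ℝ) (a : A) : A :=
  ∑ j ∈ Finset.range k,
    (iteratedDeriv j f (p a) / (Nat.factorial j : ℝ)) •
      (a - algebraMap ℝ A (p a)) ^ j

/-- Taylor-expansion extension of a two-variable function to a Weil algebra. -/
noncomputable def TA2 {A : Type*} [CommRing A] [Algebra ℝ A]
    (p : A →ₐ[ℝ] ℝ) (k : ℕ) (f : ℝ → ℝ → ℝ) (a b : A) : A :=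
  ∑ i ∈ Finset.range k, ∑ j ∈ Finset.range k,
    ((iteratedDeriv i (fun x => iteratedDeriv j (fun y => f x y) (p b)) (p a)) /
        ((Nat.factorial i : ℝ) * (Nat.factorial j : ℝ))) •
      ((a - algebraMap ℝ A (p a)) ^ i * (b - algebraMap ℝ A (p b)) ^ j)

/-- The Taylor-expansion extension applied to the multiplication map recovers
the multiplication of the Weil algebra `A`, applied to addition recovers the
addition, and applied to scalar multiplication by `t` recovers multiplication
by `t·1`.  In particular `A` is recovered from the functor `T_A` at `ℝ`. -/
theorem TA_recovers_algebra_structure {A : Type*} [CommRing A] [Algebra ℝ A]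
    [FiniteDimensional ℝ A]
    (p : A →ₐ[ℝ] ℝ) (k : ℕ) (hk1 : 1 ≤ k)
    (hk : ∀ a : A, (a - algebraMap ℝ A (p a)) ^ k = 0) :
    (∀ a b : A, TA2 p k (fun x y => x * y) a b = a * b) ∧
    (∀ a b : A, TA2 p k (fun x y => x + y) a b = a + b) ∧
    (∀ (t : ℝ) (a : A), TA p k (fun x => t * x) a = algebraMap ℝ A t * a) := by
  rcases eq_or_lt_of_le hk1 with h1 | h2
  · -- k = 1 : then every element is a scalar
    subst h1
    have ha : ∀ a : A, algebraMap ℝ A (p a) = a := by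
      intro a
      have := hk a
      rw [pow_one, sub_eq_zero] at this
      exact this.symm
    refine ⟨?_, ?_, ?_⟩
    · intro a b
      simp only [TA2, Finset.sum_range_one]
      simp [Algebra.smul_def, map_mul, ha]
    · intro a b
      simp only [TA2, Finset.sum_range_one]
      simp [Algebra.smul_def, map_add, ha]
    · intro t a
      simp only [TA, Finset.sum_range_one]
      simp [Algebra.smul_def, map_mul, ha]
  · -- k ≥ 2
    have hk2 : 2 ≤ k := h2
    refine ⟨?_, ?_, ?_⟩
    · -- multiplication
      intro a b
      have hin : ∀ (x : ℝ) (j : ℕ), iteratedDeriv j (fun y : ℝ => x * y) (p b)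
          = if j = 0 then x * p b else if j = 1 then x else 0 := by
        intro x j
        rw [itdLinear' (fun y : ℝ => x * y) x 0 (fun y => by ring)]
        split_ifs <;> ring
      have hout : ∀ (i j : ℕ),
          iteratedDeriv i (fun x : ℝ => if j = 0 then x * p b else if j = 1 then x else 0) (p a)
          = if i = 0 then (if j = 0 then p a * p b else if j = 1 then p a else 0)
            else if i = 1 then (if j = 0 then p b else if j = 1 then 1 else 0) else 0 := by
        intro i j
        rcases j with _ | _ | j
        · norm_num
          rw [itdLinear' (fun x : ℝ => x) 1 0 (fun x => by ring)]
          split_ifs <;> ring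
        · norm_num
          rw [itdLinear' (fun x : ℝ => x) 1 0 (fun x => by ring)]
          split_ifs <;> ring
        · have hj0 : (j + 2) ≠ 0 := by omega
          have hj1 : (j + 2) ≠ 1 := by omega
          simp only [hj0, hj1, if_false]
          rw [itdLinear' (fun _ : ℝ => (0 : ℝ)) 0 0 (fun x => by ring)]
          split_ifs <;> ring
      simp only [TA2, hin, hout]
      rw [sumTwo hk2 _ (fun i hi => Finset.sum_eq_zero (fun j _ => by
            simp [show i ≠ 0 by omega, show i ≠ 1 by omega])),
          sumTwo hk2 _ (fun j hj => by
            simp [show j ≠ 0 by omega, show j ≠ 1 by omega]),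
          sumTwo hk2 _ (fun j hj => by
            simp [show j ≠ 0 by omega, show j ≠ 1 by omega])]
      norm_num
      simp only [Algebra.smul_def, map_mul, map_add, map_one]
      ring
    · -- addition
      intro a b
      have hin : ∀ (x : ℝ) (j : ℕ), iteratedDeriv j (fun y : ℝ => x + y) (p b)
          = if j = 0 then x + p b else if j = 1 then 1 else 0 := by
        intro x j
        rw [itdLinear' (fun y : ℝ => x + y) 1 x (fun y => by ring)]
        split_ifs <;> ring
      have hout : ∀ (i j : ℕ),
          iteratedDeriv i (fun x : ℝ => if j = 0 then x + p b else if j = 1 then 1 else 0) (p a)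
          = if i = 0 then (if j = 0 then p a + p b else if j = 1 then 1 else 0)
            else if i = 1 then (if j = 0 then 1 else 0) else 0 := by
        intro i j
        rcases j with _ | _ | j
        · norm_num
          rw [itdLinear' (fun x : ℝ => x + p b) 1 (p b) (fun x => by ring)]
          split_ifs <;> ring
        · norm_num
          rw [itdLinear' (fun _ : ℝ => (1 : ℝ)) 0 1 (fun x => by ring)]
          split_ifs <;> ring
        · have hj0 : (j + 2) ≠ 0 := by omega
          have hj1 : (j + 2) ≠ 1 := by omega
          simp only [hj0, hj1, if_false]
          rw [itdLinear' (fun _ : ℝ => (0 : ℝ)) 0 0 (fun x => by ring)]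
          split_ifs <;> ring
      simp only [TA2, hin, hout]
      rw [sumTwo hk2 _ (fun i hi => Finset.sum_eq_zero (fun j _ => by
            simp [show i ≠ 0 by omega, show i ≠ 1 by omega])),
          sumTwo hk2 _ (fun j hj => by
            simp [show j ≠ 0 by omega, show j ≠ 1 by omega]),
          sumTwo hk2 _ (fun j hj => by
            simp [show j ≠ 0 by omega, show j ≠ 1 by omega])]
      norm_num
      simp only [Algebra.smul_def, map_mul, map_add, map_one]
      ring
    · -- scalar multiplication
      intro t a
      have hin : ∀ (j : ℕ) (x : ℝ), iteratedDeriv j (fun x : ℝ => t * x) x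
          = if j = 0 then t * x else if j = 1 then t else 0 := by
        intro j x
        rw [itdLinear' (fun x : ℝ => t * x) t 0 (fun y => by ring)]
        split_ifs <;> ring
      simp only [TA, hin]
      rw [sumTwo hk2 _ (fun j hj => by
            simp [show j ≠ 0 by omega, show j ≠ 1 by omega])]
      norm_num
      simp only [Algebra.smul_def, map_mul, map_add, map_one]
      ring
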